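/- For every nonnegative integer n and positive integer p, Bel^{(p)}_{n,λ} = p Σ_{m=0}^{n} Σ_{l=0}^{m} C(n,m) (-1)^l/(p+l) · S_{2,λ}(m,l) · Bel_{n-m,λ}, where Bel_{j,λ} = Σ_{k=0}^{j} S_{2,λ}(j,k). -/

import Mathlib

open Finset

def degFall (l x : ℝ) (n : ℕ) : ℝ := ∏ i ∈ Finset.range n, (x - i * l)

def fall (x : ℝ) (n : ℕ) : ℝ := ∏ i ∈ Finset.range n, (x - i)

lemma fall_zero (x : ℝ) : fall x 0 = 1 := by simp [fall]

lemma fall_succ (x : ℝ) (k : ℕ) : fall x (k+1) = fall x k * (x - k) := by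
  simp [fall, Finset.prod_range_succ]

lemma fall_succ' (x : ℝ) (k : ℕ) : fall (x+1) (k+1) = (x+1) * fall x k := by
  unfold fall
  rw [Finset.prod_range_succ']
  simp [mul_comm]

lemma fall_nat_eq_zero {j k : ℕ} (h : j < k) : fall (j:ℝ) k = 0 := by
  apply Finset.prod_eq_zero (Finset.mem_range.2 h)
  simp

lemma fall_nat_self (k : ℕ) : fall (k:ℝ) k = (k.factorial : ℝ) := by
  induction k with
  | zero => simp [fall]
  | succ n ih =>
    have : ((n+1:ℕ):ℝ) = (n:ℝ) + 1 := by push_cast; ring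
    rw [this, fall_succ' (n:ℝ) n, ih]
    push_cast [Nat.factorial_succ]
    ring

lemma degFall_succ (l x : ℝ) (n : ℕ) : degFall l x (n+1) = degFall l x n * (x - n * l) := by
  simp [degFall, Finset.prod_range_succ]

lemma coeff_unique {N : ℕ} {a : ℕ → ℝ}
    (h : ∀ y : ℝ, ∑ k ∈ range N, a k * fall y k = 0) : ∀ k, k < N → a k = 0 := by
  intro k
  induction k using Nat.strong_induction_on with
  | _ k ih =>
    intro hk
    have h0 := h (k:ℝ)
    have hs : ∑ j ∈ range N, a j * fall (k:ℝ) j = a k * fall (k:ℝ) k := by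
      apply Finset.sum_eq_single
      · intro b hb hbk
        rcases lt_or_gt_of_ne hbk with hlt | hgt
        · rw [ih b hlt (lt_trans hlt hk)]; ring
        · rw [fall_nat_eq_zero hgt]; ring
      · intro hkn
        exact absurd (mem_range.2 hk) hkn
    rw [hs, fall_nat_self] at h0
    have hf : (k.factorial : ℝ) ≠ 0 := by exact_mod_cast k.factorial_ne_zero
    exact (mul_eq_zero.1 h0).resolve_right hf

section
variable (l : ℝ) (S2 : ℕ → ℕ → ℝ)

noncomputable def T (m k : ℕ) : ℝ := if k ≤ m then S2 m k else 0

variable (hS : ∀ (y : ℝ) (m : ℕ),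
      degFall l y m = ∑ k ∈ Finset.range (m + 1), S2 m k * fall y k)
include hS

lemma hS' : ∀ (y : ℝ) (m : ℕ),
    degFall l y m = ∑ k ∈ Finset.range (m + 1), T S2 m k * fall y k := by
  intro y m
  rw [hS y m]
  apply Finset.sum_congr rfl
  intro k hk
  rw [T, if_pos (Nat.lt_succ_iff.1 (mem_range.1 hk))]

lemma T_zero : ∀ k, T S2 0 k = if k = 0 then 1 else 0 := by
  intro k
  rcases Nat.eq_zero_or_pos k with hk | hk
  · subst hk
    have h := hS' l S2 hS 0 0
    simp [degFall, fall_zero] at h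
    simp [← h]
  · rw [if_neg (by omega), T, if_neg (by omega)]

lemma T_rec : ∀ n k, T S2 (n+1) k
    = (if k = 0 then 0 else T S2 n (k-1)) + ((k:ℝ) - n*l) * T S2 n k := by
  intro n k
  let c : ℕ → ℝ := fun k => (if k = 0 then 0 else T S2 n (k-1)) + ((k:ℝ) - n*l) * T S2 n k
  have hc : ∀ j, c j = (if j = 0 then 0 else T S2 n (j-1)) + ((j:ℝ) - n*l) * T S2 n j :=
    fun j => rfl
  show T S2 (n+1) k = c k
  rcases Nat.lt_or_ge k (n+2) with hk | hk
  · -- use coeff_unique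
    have key : ∀ y : ℝ, ∑ j ∈ range (n+2), (T S2 (n+1) j - c j) * fall y j = 0 := by
      intro y
      have e1 : ∑ j ∈ range (n+2), T S2 (n+1) j * fall y j = degFall l y (n+1) :=
        (hS' l S2 hS y (n+1)).symm
      have e2 : ∑ j ∈ range (n+2), c j * fall y j = degFall l y (n+1) := by
        rw [degFall_succ, hS' l S2 hS y n]
        have splitc : ∑ j ∈ range (n+2), c j * fall y j
            = (∑ j ∈ range (n+2), (if j = 0 then 0 else T S2 n (j-1)) * fall y j)
              + ∑ j ∈ range (n+2), ((j:ℝ) - n*l) * T S2 n j * fall y j := by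
          rw [← Finset.sum_add_distrib]
          apply Finset.sum_congr rfl; intro j _; rw [hc j]; ring
        rw [splitc]
        have e3 : ∑ j ∈ range (n+2), (if j = 0 then 0 else T S2 n (j-1)) * fall y j
            = ∑ j ∈ range (n+1), T S2 n j * fall y (j+1) := by
          rw [Finset.sum_range_succ']
          simp
        have e4 : ∑ j ∈ range (n+2), ((j:ℝ) - n*l) * T S2 n j * fall y j
            = ∑ j ∈ range (n+1), ((j:ℝ) - n*l) * T S2 n j * fall y j := by
          rw [Finset.sum_range_succ]
          have : T S2 n (n+1) = 0 := by simp [T]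
          simp [this]
        rw [e3, e4, Finset.sum_mul, ← Finset.sum_add_distrib]
        apply Finset.sum_congr rfl
        intro j _
        rw [fall_succ]
        ring
      calc ∑ j ∈ range (n+2), (T S2 (n+1) j - c j) * fall y j
          = (∑ j ∈ range (n+2), T S2 (n+1) j * fall y j)
            - ∑ j ∈ range (n+2), c j * fall y j := by
            rw [← Finset.sum_sub_distrib]; apply Finset.sum_congr rfl; intro j _; ring
        _ = 0 := by rw [e1, e2]; ring
    have := coeff_unique key k hk
    linarith
  · -- both sides zero
    have h1 : T S2 (n+1) k = 0 := by simp [T]; intro h; omega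
    have h2 : T S2 n k = 0 := by simp [T]; intro h; omega
    have h3 : (if k = 0 then (0:ℝ) else T S2 n (k-1)) = 0 := by
      rw [if_neg (by omega)]
      simp [T]; intro h; omega
    rw [h1, hc k, h2, h3]; ring

end


section
variable (l : ℝ) (S2 : ℕ → ℕ → ℝ)
variable (hS : ∀ (y : ℝ) (m : ℕ),
      degFall l y m = ∑ k ∈ Finset.range (m + 1), S2 m k * fall y k)

lemma T_top (m k : ℕ) (h : m < k) : T S2 m k = 0 := by
  rw [T, if_neg (by omega)]

noncomputable def D (m k : ℕ) : ℝ := if k = 0 then 0 else T S2 m (k-1)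

include hS in
lemma T_recD (n k : ℕ) : T S2 (n+1) k = D S2 n k + ((k:ℝ) - n*l) * T S2 n k := by
  rw [T_rec l S2 hS n k]; rfl

lemma pascal_split (n : ℕ) (g : ℕ → ℝ) :
    ∑ m ∈ range (n+2), ((n+1).choose m : ℝ) * g m
    = ∑ m ∈ range (n+1), (n.choose m : ℝ) * g m
      + ∑ m ∈ range (n+1), (n.choose m : ℝ) * g (m+1) := by
  rw [Finset.sum_range_succ' (fun m => ((n+1).choose m : ℝ) * g m)]
  have e2 : ∑ m ∈ range (n+1), (((n+1).choose (m+1) : ℕ) : ℝ) * g (m+1)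
      = ∑ m ∈ range (n+1), (n.choose m : ℝ) * g (m+1)
        + ∑ m ∈ range (n+1), (n.choose (m+1) : ℝ) * g (m+1) := by
    rw [← Finset.sum_add_distrib]
    apply Finset.sum_congr rfl
    intro m _; rw [Nat.choose_succ_succ]; push_cast; ring
  rw [e2]
  have e3 := Finset.sum_range_succ' (fun m => (n.choose m : ℝ) * g m) (n+1)
  rw [Finset.sum_range_succ] at e3
  simp only [Nat.choose_succ_self, Nat.cast_zero, zero_mul, add_zero,
    Nat.choose_zero_right, Nat.cast_one, one_mul] at e3 ⊢
  linarith

include l hS in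
lemma Hconv (n : ℕ) : ∀ j k,
    ∑ m ∈ range (n+1), (n.choose m : ℝ) * (T S2 m j * T S2 (n-m) k)
    = (((j+k).choose j : ℕ) : ℝ) * T S2 n (j+k) := by
  induction n with
  | zero =>
    intro j k
    rw [Finset.sum_range_one, T_zero l S2 hS, T_zero l S2 hS, T_zero l S2 hS]
    rcases j with _ | j <;> rcases k with _ | k <;> simp
  | succ n ih =>
    intro j k
    have step1 : ∑ m ∈ range (n+2), ((n+1).choose m : ℝ) * (T S2 m j * T S2 (n+1-m) k)
        = ∑ m ∈ range (n+1), (n.choose m : ℝ) * (T S2 m j * T S2 ((n-m)+1) k)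
          + ∑ m ∈ range (n+1), (n.choose m : ℝ) * (T S2 (m+1) j * T S2 (n-m) k) := by
      rw [pascal_split n (fun m => T S2 m j * T S2 (n+1-m) k)]
      congr 1
      · apply Finset.sum_congr rfl; intro m hm
        have : n + 1 - m = (n-m)+1 := by
          have := Nat.lt_succ_iff.1 (mem_range.1 hm); omega
        rw [this]
      · apply Finset.sum_congr rfl; intro m hm
        have : n + 1 - (m+1) = n - m := by omega
        rw [this]
    rw [step1]
    have expandA : ∑ m ∈ range (n+1), (n.choose m : ℝ) * (T S2 m j * T S2 ((n-m)+1) k)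
        = ∑ m ∈ range (n+1), (n.choose m : ℝ) * (T S2 m j * D S2 (n-m) k)
          + ∑ m ∈ range (n+1), (((k:ℝ) - ((n:ℝ)-(m:ℝ))*l) * ((n.choose m : ℝ) * (T S2 m j * T S2 (n-m) k))) := by
      rw [← Finset.sum_add_distrib]
      apply Finset.sum_congr rfl
      intro m hm
      have hm' : m ≤ n := Nat.lt_succ_iff.1 (mem_range.1 hm)
      rw [T_recD l S2 hS (n-m) k, Nat.cast_sub hm']
      ring
    have expandB : ∑ m ∈ range (n+1), (n.choose m : ℝ) * (T S2 (m+1) j * T S2 (n-m) k)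
        = ∑ m ∈ range (n+1), (n.choose m : ℝ) * (D S2 m j * T S2 (n-m) k)
          + ∑ m ∈ range (n+1), (((j:ℝ) - (m:ℝ)*l) * ((n.choose m : ℝ) * (T S2 m j * T S2 (n-m) k))) := by
      rw [← Finset.sum_add_distrib]
      apply Finset.sum_congr rfl
      intro m _
      rw [T_recD l S2 hS m j]
      ring
    rw [expandA, expandB]
    -- combine the two lambda-terms
    have lam : ∑ m ∈ range (n+1), (((k:ℝ) - ((n:ℝ)-(m:ℝ))*l) * ((n.choose m : ℝ) * (T S2 m j * T S2 (n-m) k)))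
        + ∑ m ∈ range (n+1), (((j:ℝ) - (m:ℝ)*l) * ((n.choose m : ℝ) * (T S2 m j * T S2 (n-m) k)))
        = ((j:ℝ) + (k:ℝ) - (n:ℝ)*l) * ((((j+k).choose j : ℕ) : ℝ) * T S2 n (j+k)) := by
      rw [← Finset.sum_add_distrib, ← ih j k, Finset.mul_sum]
      apply Finset.sum_congr rfl
      intro m _
      ring
    have termA : ∑ m ∈ range (n+1), (n.choose m : ℝ) * (T S2 m j * D S2 (n-m) k)
        = if k = 0 then 0 else (((j+(k-1)).choose j : ℕ) : ℝ) * T S2 n (j+(k-1)) := by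
      rcases k with _ | k
      · simp [D]
      · rw [if_neg (by omega)]
        have : ∀ m, D S2 (n-m) (k+1) = T S2 (n-m) k := fun m => by simp [D]
        simp only [this, Nat.add_sub_cancel]
        exact ih j k
    have termB : ∑ m ∈ range (n+1), (n.choose m : ℝ) * (D S2 m j * T S2 (n-m) k)
        = if j = 0 then 0 else ((((j-1)+k).choose (j-1) : ℕ) : ℝ) * T S2 n ((j-1)+k) := by
      rcases j with _ | j
      · simp [D]
      · rw [if_neg (by omega)]
        have : ∀ m, D S2 m (j+1) = T S2 m j := fun m => by simp [D]
        simp only [this, Nat.add_sub_cancel]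
        exact ih j k
    rw [show ∀ a b c d : ℝ, (a + b) + (c + d) = (a + c) + (b + d) by intros; ring] at *
    rw [termA, termB, lam]
    -- RHS
    rw [T_recD l S2 hS n (j+k)]
    rcases j with _ | j <;> rcases k with _ | k
    · simp [D]
    · simp only [if_pos rfl, if_neg (Nat.succ_ne_zero k), Nat.add_sub_cancel, D]
      push_cast
      simp
    · simp only [if_pos rfl, if_neg (Nat.succ_ne_zero j), Nat.add_sub_cancel, D]
      push_cast
      simp
    · rw [if_neg (Nat.succ_ne_zero k), if_neg (Nat.succ_ne_zero j)]
      simp only [Nat.add_sub_cancel, D, Nat.succ_sub_one]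
      rw [if_neg (by omega : ¬ (j+1) + (k+1) = 0)]
      have h1 : (j+1) + (k+1) - 1 = j + 1 + k := by omega
      have h2 : j + (k+1) = j + 1 + k := by omega
      have h3 : (j+1)+(k+1) = j+1+k+1 := by omega
      rw [h1, h2, h3]
      have pas : (((j+1+k+1).choose (j+1) : ℕ) : ℝ)
          = ((j+1+k).choose j : ℝ) + ((j+1+k).choose (j+1) : ℝ) := by
        rw [show j+1+k+1 = (j+k+1)+1 by omega, show j+1+k = (j+k+1) by omega,
          Nat.choose_succ_succ]
        push_cast; ring
      rw [pas]
      push_cast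
      ring

include l hS in
lemma star (n j : ℕ) :
    ∑ m ∈ range (n+1), (n.choose m : ℝ) * (T S2 m j * ∑ k ∈ range (n-m+1), T S2 (n-m) k)
    = ∑ k ∈ range (n+1), T S2 n k * (k.choose j : ℝ) := by
  have ext1 : ∀ m ∈ range (n+1),
      (n.choose m : ℝ) * (T S2 m j * ∑ k ∈ range (n-m+1), T S2 (n-m) k)
      = ∑ k ∈ range (n+1), (n.choose m : ℝ) * (T S2 m j * T S2 (n-m) k) := by
    intro m hm
    have hm' : m ≤ n := Nat.lt_succ_iff.1 (mem_range.1 hm)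
    have : ∑ k ∈ range (n-m+1), T S2 (n-m) k = ∑ k ∈ range (n+1), T S2 (n-m) k := by
      apply Finset.sum_subset
      · intro x hx
        rw [mem_range] at *
        omega
      · intro x _ hx
        rw [mem_range] at hx
        exact T_top S2 _ _ (by omega)
    rw [this, Finset.mul_sum, Finset.mul_sum]
  rw [Finset.sum_congr rfl ext1, Finset.sum_comm]
  have ext2 : ∀ k ∈ range (n+1),
      ∑ m ∈ range (n+1), (n.choose m : ℝ) * (T S2 m j * T S2 (n-m) k)
      = (((j+k).choose j : ℕ) : ℝ) * T S2 n (j+k) := fun k _ => Hconv l S2 hS n j k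
  rw [Finset.sum_congr rfl ext2]
  -- reindex
  have e1 : ∑ k ∈ range (j+(n+1)), (k.choose j : ℝ) * T S2 n k
      = ∑ k ∈ range (n+1), (((j+k).choose j : ℕ) : ℝ) * T S2 n (j+k) := by
    rw [Finset.sum_range_add]
    have : ∑ k ∈ range j, (k.choose j : ℝ) * T S2 n k = 0 := by
      apply Finset.sum_eq_zero
      intro k hk
      rw [Nat.choose_eq_zero_of_lt (mem_range.1 hk)]
      simp
    rw [this, zero_add]
  have e2 : ∑ k ∈ range ((n+1)+j), (k.choose j : ℝ) * T S2 n k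
      = ∑ k ∈ range (n+1), (k.choose j : ℝ) * T S2 n k := by
    rw [Finset.sum_range_add]
    have : ∑ k ∈ range j, ((n+1+k).choose j : ℝ) * T S2 n (n+1+k) = 0 := by
      apply Finset.sum_eq_zero
      intro k _
      rw [T_top S2 n (n+1+k) (by omega)]
      ring
    rw [this, add_zero]
  have e3 : j + (n+1) = (n+1) + j := by omega
  rw [← e1, e3, e2]
  apply Finset.sum_congr rfl
  intro k _
  ring


lemma beta (k : ℕ) : ∀ q : ℕ,
    ∑ i ∈ range (k+1), (-1:ℝ)^i * (k.choose i : ℝ) / ((q:ℝ)+1+(i:ℝ))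
    = (k.factorial : ℝ) * (q.factorial : ℝ) / ((q+k+1).factorial : ℝ) := by
  induction k with
  | zero =>
    intro q
    rw [Finset.sum_range_one]
    have h1 : ((q+0+1).factorial : ℝ) = ((q:ℝ)+1) * (q.factorial : ℝ) := by
      rw [show q+0+1 = q+1 by omega, Nat.factorial_succ]; push_cast; ring
    rw [h1]
    have hq : ((q:ℝ)+1) ≠ 0 := by positivity
    have hf : (q.factorial : ℝ) ≠ 0 := by exact_mod_cast q.factorial_ne_zero
    field_simp
    simp
  | succ k ih =>
    intro q
    have peel : ∑ i ∈ range (k+2), (-1:ℝ)^i * ((k+1).choose i : ℝ) / ((q:ℝ)+1+(i:ℝ))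
        = (∑ i ∈ range (k+1), (-1:ℝ)^(i+1) * ((k+1).choose (i+1) : ℝ) / ((q:ℝ)+1+((i:ℝ)+1)))
          + 1 / ((q:ℝ)+1) := by
      rw [Finset.sum_range_succ' (fun i => (-1:ℝ)^i * ((k+1).choose i : ℝ) / ((q:ℝ)+1+(i:ℝ)))]
      simp
    rw [peel]
    have split : ∑ i ∈ range (k+1), (-1:ℝ)^(i+1) * ((k+1).choose (i+1) : ℝ) / ((q:ℝ)+1+((i:ℝ)+1))
        = -(∑ i ∈ range (k+1), (-1:ℝ)^i * (k.choose i : ℝ) / ((q:ℝ)+2+(i:ℝ)))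
          - ∑ i ∈ range (k+1), (-1:ℝ)^i * (k.choose (i+1) : ℝ) / ((q:ℝ)+2+(i:ℝ)) := by
      rw [← Finset.sum_neg_distrib, ← Finset.sum_sub_distrib]
      apply Finset.sum_congr rfl
      intro i _
      rw [Nat.choose_succ_succ]
      push_cast
      ring
    rw [split]
    have ih1 : ∑ i ∈ range (k+1), (-1:ℝ)^i * (k.choose i : ℝ) / ((q:ℝ)+2+(i:ℝ))
        = (k.factorial : ℝ) * ((q+1).factorial : ℝ) / ((q+k+2).factorial : ℝ) := by
      have h := ih (q+1)
      rw [show q+1+k+1 = q+k+2 by omega] at h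
      rw [← h]
      apply Finset.sum_congr rfl
      intro i _
      push_cast
      ring_nf
    have ih2 : ∑ i ∈ range (k+1), (-1:ℝ)^i * (k.choose (i+1) : ℝ) / ((q:ℝ)+2+(i:ℝ))
        = 1/((q:ℝ)+1) - (k.factorial : ℝ) * (q.factorial : ℝ) / ((q+k+1).factorial : ℝ) := by
      have h := ih q
      rw [Finset.sum_range_succ' (fun i => (-1:ℝ)^i * (k.choose i : ℝ) / ((q:ℝ)+1+(i:ℝ)))] at h
      simp only [Nat.choose_zero_right, Nat.cast_one, pow_zero, one_mul, Nat.cast_zero,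
        add_zero] at h
      push_cast at h
      -- h : ∑ i ∈ range k, (-1)^(i+1) * C(k,i+1)/(q+1+(i+1)) + 1/(q+1) = RHS
      have e : ∑ i ∈ range (k+1), (-1:ℝ)^i * (k.choose (i+1) : ℝ) / ((q:ℝ)+2+(i:ℝ))
          = ∑ i ∈ range k, (-1:ℝ)^i * (k.choose (i+1) : ℝ) / ((q:ℝ)+2+(i:ℝ)) := by
        rw [Finset.sum_range_succ, Nat.choose_succ_self]
        simp
      rw [e]
      have e2 : ∑ i ∈ range k, (-1:ℝ)^(i+1) * (k.choose (i+1) : ℝ) / ((q:ℝ)+1+((i:ℝ)+1))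
          = -∑ i ∈ range k, (-1:ℝ)^i * (k.choose (i+1) : ℝ) / ((q:ℝ)+2+(i:ℝ)) := by
        rw [← Finset.sum_neg_distrib]
        apply Finset.sum_congr rfl
        intro i _
        ring_nf
      rw [e2] at h
      linarith
    rw [ih1, ih2]
    -- final arithmetic
    have f1 : ((q+k+2).factorial : ℝ) = ((q:ℝ)+(k:ℝ)+2) * ((q+k+1).factorial : ℝ) := by
      rw [show q+k+2 = (q+k+1)+1 by omega, Nat.factorial_succ]; push_cast; ring
    have f2 : (((q+1)).factorial : ℝ) = ((q:ℝ)+1) * (q.factorial : ℝ) := by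
      rw [Nat.factorial_succ]; push_cast; ring
    have f3 : (((k+1)).factorial : ℝ) = ((k:ℝ)+1) * (k.factorial : ℝ) := by
      rw [Nat.factorial_succ]; push_cast; ring
    rw [show q+(k+1)+1 = q+k+2 by omega, f1, f2, f3]
    have h1 : ((q+k+1).factorial : ℝ) ≠ 0 := by exact_mod_cast (q+k+1).factorial_ne_zero
    have h2 : ((q:ℝ)+(k:ℝ)+2) ≠ 0 := by positivity
    have h3 : ((q:ℝ)+1) ≠ 0 := by positivity
    field_simp
    ring

lemma tri (n : ℕ) (f : ℕ → ℕ → ℝ) (hf : ∀ k i, k < i → f k i = 0) :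
    ∑ k ∈ range (n+1), ∑ i ∈ range (k+1), f k i
    = ∑ i ∈ range (n+1), ∑ k ∈ range (n+1), f k i := by
  have h : ∀ k ∈ range (n+1), ∑ i ∈ range (k+1), f k i = ∑ i ∈ range (n+1), f k i := by
    intro k hk
    apply Finset.sum_subset
    · intro x hx; rw [mem_range] at *; omega
    · intro x _ hx; exact hf k x (by rw [mem_range] at hx; omega)
  rw [Finset.sum_congr rfl h, Finset.sum_comm]


end

theorem truncated_degenerate_Bell_via_Bell_numbers
    (l : ℝ) (n p : ℕ) (hp : 0 < p) (S2 : ℕ → ℕ → ℝ)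
    (hS : ∀ (y : ℝ) (m : ℕ),
      degFall l y m = ∑ k ∈ Finset.range (m + 1), S2 m k * fall y k) :
    (∑ k ∈ Finset.range (n + 1), S2 n k / (((k + p).choose k : ℕ) : ℝ))
      = (p : ℝ) * ∑ m ∈ Finset.range (n + 1), ∑ l' ∈ Finset.range (m + 1),
          ((n.choose m : ℕ) : ℝ) * ((-1 : ℝ) ^ l' / ((p + l' : ℕ) : ℝ)) * S2 m l' *
            (∑ k ∈ Finset.range (n - m + 1), S2 (n - m) k) := by
  obtain ⟨q, rfl⟩ : ∃ q, p = q + 1 := ⟨p - 1, by omega⟩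
  have hT : ∀ m k, k ≤ m → T S2 m k = S2 m k := fun m k h => if_pos h
  have inv_choose : ∀ k : ℕ, (1:ℝ) / (((k + (q+1)).choose k : ℕ) : ℝ)
      = ((q+1 : ℕ) : ℝ) * ∑ i ∈ range (k+1), (-1:ℝ)^i * (k.choose i : ℝ) / ((q:ℝ)+1+(i:ℝ)) := by
    intro k
    rw [beta k q]
    have hcf : ((k + (q+1)).choose k : ℝ) * ((k.factorial : ℝ) * ((q+1).factorial : ℝ))
        = ((k+q+1).factorial : ℝ) := by
      have h0 := Nat.choose_mul_factorial_mul_factorial (Nat.le_add_right k (q+1))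
      rw [show k + (q+1) - k = q+1 by omega] at h0
      have h1 := congrArg (fun x : ℕ => (x : ℝ)) h0
      push_cast at h1
      rw [show k + (q+1) = k+q+1 by omega] at h1 ⊢
      linarith [h1]
    have h1 : ((k+q+1).factorial : ℝ) ≠ 0 := by exact_mod_cast (k+q+1).factorial_ne_zero
    have h2 : ((k + (q+1)).choose k : ℝ) ≠ 0 := by
      have : 0 < (k + (q+1)).choose k := Nat.choose_pos (Nat.le_add_right _ _)
      positivity
    have h3 : (k.factorial : ℝ) ≠ 0 := by exact_mod_cast k.factorial_ne_zero
    have h4 : (q.factorial : ℝ) ≠ 0 := by exact_mod_cast q.factorial_ne_zero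
    have f2 : (((q+1)).factorial : ℝ) = ((q:ℝ)+1) * (q.factorial : ℝ) := by
      rw [Nat.factorial_succ]; push_cast; ring
    rw [f2] at hcf
    rw [show q+k+1 = k+q+1 by omega]
    push_cast
    field_simp
    nlinarith [hcf]
  have L1 : (∑ k ∈ Finset.range (n + 1), S2 n k / (((k + (q+1)).choose k : ℕ) : ℝ))
      = ((q+1:ℕ) : ℝ) * ∑ k ∈ range (n+1), ∑ i ∈ range (k+1),
          T S2 n k * ((-1:ℝ)^i * (k.choose i : ℝ) / ((q:ℝ)+1+(i:ℝ))) := by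
    rw [Finset.mul_sum]
    apply Finset.sum_congr rfl
    intro k hk
    have hs : ∑ i ∈ range (k+1), T S2 n k * ((-1:ℝ)^i * (k.choose i : ℝ) / ((q:ℝ)+1+(i:ℝ)))
        = T S2 n k * ∑ i ∈ range (k+1), (-1:ℝ)^i * (k.choose i : ℝ) / ((q:ℝ)+1+(i:ℝ)) := by
      rw [Finset.mul_sum]
    rw [← hT n k (Nat.lt_succ_iff.1 (mem_range.1 hk)), div_eq_mul_one_div, inv_choose k, hs]
    ring
  rw [L1, tri n _ (by
    intro k i hki
    rw [Nat.choose_eq_zero_of_lt hki]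
    simp)]
  congr 1
  have L2 : ∀ i ∈ range (n+1), ∑ k ∈ range (n+1), T S2 n k * ((-1:ℝ)^i * (k.choose i : ℝ) / ((q:ℝ)+1+(i:ℝ)))
      = ∑ m ∈ range (n+1), ((n.choose m : ℕ) : ℝ) * ((-1 : ℝ) ^ i / (((q+1) + i : ℕ) : ℝ)) * T S2 m i *
            (∑ k ∈ Finset.range (n - m + 1), T S2 (n - m) k) := by
    intro i _
    have hs : ∑ k ∈ range (n+1), T S2 n k * ((-1:ℝ)^i * (k.choose i : ℝ) / ((q:ℝ)+1+(i:ℝ)))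
        = ((-1:ℝ)^i / ((q:ℝ)+1+(i:ℝ))) * ∑ k ∈ range (n+1), T S2 n k * (k.choose i : ℝ) := by
      rw [Finset.mul_sum]
      apply Finset.sum_congr rfl
      intro k _
      ring
    rw [hs, ← star l S2 hS n i, Finset.mul_sum]
    apply Finset.sum_congr rfl
    intro m _
    have : (((q+1) + i : ℕ) : ℝ) = ((q:ℝ)+1+(i:ℝ)) := by push_cast; ring
    rw [this]
    ring
  rw [Finset.sum_congr rfl L2]
  rw [← tri n (fun m i => ((n.choose m : ℕ) : ℝ) * ((-1 : ℝ) ^ i / (((q+1) + i : ℕ) : ℝ)) * T S2 m i *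
            (∑ k ∈ Finset.range (n - m + 1), T S2 (n - m) k)) (by
    intro m i hmi
    simp [T_top S2 m i hmi])]
  apply Finset.sum_congr rfl
  intro m hm
  apply Finset.sum_congr rfl
  intro i hi
  rw [hT m i (Nat.lt_succ_iff.1 (mem_range.1 hi))]
  congr 1
  apply Finset.sum_congr rfl
  intro k hk
  rw [hT (n-m) k (Nat.lt_succ_iff.1 (mem_range.1 hk))]
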